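/- Let T1, T2 be q-commuting contractions on H with T = T1T2, and let Q be the positive square root of the SOT-limit of TⁿT*ⁿ. Then for i = 1, 2 and all h ∈ H, ⟨Ti Q² Ti* h, h⟩ ≤ ⟨Q² h, h⟩; in particular the densely defined maps Xi*: Q h ↦ Q Ti* h extend to contractions on the closure of the range of Q. -/

import Mathlib

open ContinuousLinearMap Filter
open scoped InnerProductSpace Topology

section Aux

variable {H : Type*} [NormedAddCommGroup H] [InnerProductSpace ℂ H] [CompleteSpace H]

/-- Given the inequality `‖Q (A h)‖ ≤ ‖Q h‖`, the map `Q h ↦ Q (A h)` extends to a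
contraction on the closure of the range of `Q`. -/
lemma aux_extension (Q A : H →L[ℂ] H) (key : ∀ h, ‖Q (A h)‖ ≤ ‖Q h‖) :
    ∃ X : (LinearMap.range (Q : H →ₗ[ℂ] H)).topologicalClosure →L[ℂ]
        (LinearMap.range (Q : H →ₗ[ℂ] H)).topologicalClosure,
      ‖X‖ ≤ 1 ∧
      ∀ (h : H) (x : (LinearMap.range (Q : H →ₗ[ℂ] H)).topologicalClosure),
        (x : H) = Q h → ((X x : (LinearMap.range (Q : H →ₗ[ℂ] H)).topologicalClosure) : H)
          = Q (A h) := by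
  set R : Submodule ℂ H := LinearMap.range (Q : H →ₗ[ℂ] H) with hR
  set S : Submodule ℂ H := R.topologicalClosure with hS
  -- well-definedness
  have wd : ∀ h h' : H, Q h = Q h' → Q (A h) = Q (A h') := by
    intro h h' hhh'
    have h1 : ‖Q (A h) - Q (A h')‖ ≤ ‖Q h - Q h'‖ := by
      simpa [map_sub] using key (h - h')
    rw [hhh', sub_self, norm_zero] at h1
    exact sub_eq_zero.mp (norm_le_zero_iff.mp h1)
  -- membership of range Q in H, choose preimages
  have mem' : ∀ x : R, ∃ h : H, Q h = (x : H) := fun x => x.2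
  classical
  let pick : R → H := fun x => (mem' x).choose
  have pick_spec : ∀ x : R, Q (pick x) = (x : H) := fun x => (mem' x).choose_spec
  -- the raw map
  let g : R → H := fun x => Q (A (pick x))
  have gspec : ∀ (x : R) (h : H), (x : H) = Q h → g x = Q (A h) := by
    intro x h hx
    exact wd _ _ (by rw [pick_spec x, hx])
  have gmem : ∀ x : R, g x ∈ S := fun x => R.le_topologicalClosure ⟨A (pick x), rfl⟩
  -- linear map
  let gl : R →ₗ[ℂ] S :=
    { toFun := fun x => ⟨g x, gmem x⟩
      map_add' := by
        intro x y
        ext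
        have : ((x + y : R) : H) = Q (pick x + pick y) := by
          push_cast [map_add, pick_spec]; ring_nf
        simpa [map_add] using gspec (x + y) (pick x + pick y) this
      map_smul' := by
        intro c x
        ext
        have : ((c • x : R) : H) = Q (c • pick x) := by
          push_cast [map_smul, pick_spec]; ring_nf
        simpa [map_smul] using gspec (c • x) (c • pick x) this }
  have glbound : ∀ x : R, ‖gl x‖ ≤ 1 * ‖x‖ := by
    intro x
    have : ‖gl x‖ = ‖Q (A (pick x))‖ := rfl
    rw [this, one_mul]
    calc ‖Q (A (pick x))‖ ≤ ‖Q (pick x)‖ := key _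
      _ = ‖(x : H)‖ := by rw [pick_spec]
      _ = ‖x‖ := rfl
  let f : R →L[ℂ] S := gl.mkContinuous 1 glbound
  -- the inclusion map
  let e : R →L[ℂ] S :=
    { toFun := fun x => ⟨(x : H), R.le_topologicalClosure x.2⟩
      map_add' := fun x y => rfl
      map_smul' := fun c x => rfl
      cont := by
        apply continuous_induced_rng.2
        exact continuous_subtype_val }
  have he : ∀ x : R, ‖x‖ ≤ (1 : NNReal) * ‖e x‖ := by
    intro x
    rw [NNReal.coe_one, one_mul]
    exact le_of_eq rfl
  have hdense : DenseRange e := by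
    intro x
    rw [Topology.IsInducing.subtypeVal.closure_eq_preimage_closure_image]
    have hx : (x : H) ∈ closure (R : Set H) := x.2
    have hsub : (R : Set H) ⊆ Subtype.val '' Set.range e := by
      intro y hy
      exact ⟨e ⟨y, hy⟩, ⟨⟨y, hy⟩, rfl⟩, rfl⟩
    exact Set.mem_preimage.2 (closure_mono hsub hx)
  let X := f.extend e
  refine ⟨X, ?_, ?_⟩
  · have h1 := opNorm_extend_le f hdense he
    have h2 : ‖f‖ ≤ 1 := gl.mkContinuous_norm_le zero_le_one glbound
    calc ‖X‖ ≤ 1 * ‖f‖ := h1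
      _ ≤ 1 := by rw [one_mul]; exact h2
  · intro h x hx
    have hxR : (x : H) ∈ R := hx ▸ ⟨h, rfl⟩
    have hex : e ⟨(x : H), hxR⟩ = x := rfl
    have h2 := ContinuousLinearMap.extend_eq f hdense
      (isUniformEmbedding_of_bound e he).isUniformInducing ⟨(x : H), hxR⟩
    rw [hex] at h2
    rw [h2]
    exact gspec ⟨(x : H), hxR⟩ h hx

end Aux

section Aux2

variable {H : Type*} [NormedAddCommGroup H] [InnerProductSpace ℂ H] [CompleteSpace H]

lemma aux_comm_pow (c : ℂ) (T B : H →L[ℂ] H) (hcomm : B * T = c • (T * B)) :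
    ∀ n : ℕ, B * T ^ n = c ^ n • (T ^ n * B) := by
  intro n
  induction n with
  | zero => simp
  | succ n ih =>
    rw [pow_succ' T n, ← mul_assoc, hcomm, smul_mul_assoc, mul_assoc, ih, mul_smul_comm,
      pow_succ' c n, ← mul_assoc, mul_smul, smul_smul, mul_comm c (c ^ n)]

lemma aux_norm_lim (T Q : H →L[ℂ] H) (hQ : Q.IsPositive)
    (hQlim : ∀ h : H, Tendsto
      (fun n : ℕ => (T ^ n * (adjoint T) ^ n) h) atTop (𝓝 ((Q * Q) h))) (v : H) :
    Tendsto (fun n : ℕ => ‖((adjoint T) ^ n) v‖ ^ 2) atTop (𝓝 (‖Q v‖ ^ 2)) := by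
  have hQadj : adjoint Q = Q := isSelfAdjoint_iff'.mp hQ.isSelfAdjoint
  have h2 : Tendsto (fun n : ℕ => ⟪(T ^ n * (adjoint T) ^ n) v, v⟫_ℂ) atTop
      (𝓝 ⟪(Q * Q) v, v⟫_ℂ) := (hQlim v).inner tendsto_const_nhds
  have h3 := (Complex.continuous_re.tendsto _).comp h2
  have hpow : ∀ n : ℕ, (adjoint T) ^ n = adjoint (T ^ n) := by
    intro n
    rw [← star_eq_adjoint, ← star_eq_adjoint, ← star_pow]
  have heq : ∀ n : ℕ, (⟪(T ^ n * (adjoint T) ^ n) v, v⟫_ℂ).re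
      = ‖((adjoint T) ^ n) v‖ ^ 2 := by
    intro n
    have : (T ^ n * (adjoint T) ^ n) v = adjoint ((adjoint T) ^ n) (((adjoint T) ^ n) v) := by
      rw [hpow, adjoint_adjoint]; rfl
    rw [this, adjoint_inner_left, inner_self_eq_norm_sq_to_K]
    simp [← Complex.ofReal_pow]
  have heq2 : (⟪(Q * Q) v, v⟫_ℂ).re = ‖Q v‖ ^ 2 := by
    have : (Q * Q) v = adjoint Q (Q v) := by rw [hQadj]; rfl
    rw [this, adjoint_inner_left, inner_self_eq_norm_sq_to_K]
    simp [← Complex.ofReal_pow]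
  rw [heq2] at h3
  exact h3.congr (fun n => heq n)

lemma aux_key (c : ℂ) (hc : ‖c‖ = 1) (T B : H →L[ℂ] H) (hB : ‖B‖ ≤ 1)
    (hcomm : B * T = c • (T * B)) (Q : H →L[ℂ] H) (hQ : Q.IsPositive)
    (hQlim : ∀ h : H, Tendsto
      (fun n : ℕ => (T ^ n * (adjoint T) ^ n) h) atTop (𝓝 ((Q * Q) h))) (h : H) :
    ‖Q (adjoint B h)‖ ≤ ‖Q h‖ := by
  have hBadj : ‖adjoint B‖ ≤ 1 := by rw [← star_eq_adjoint, norm_star]; exact hB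
  have hptwise : ∀ n : ℕ,
      ‖((adjoint T) ^ n) (adjoint B h)‖ ^ 2 ≤ ‖((adjoint T) ^ n) h‖ ^ 2 := by
    intro n
    have h1 : adjoint (B * T ^ n) = adjoint (T ^ n) * adjoint B := by
      rw [← star_eq_adjoint, ← star_eq_adjoint, ← star_eq_adjoint, star_mul]
    have hpow : (adjoint T) ^ n = adjoint (T ^ n) := by
      rw [← star_eq_adjoint, ← star_eq_adjoint, ← star_pow]
    have h2 : adjoint (c ^ n • (T ^ n * B))
        = (starRingEnd ℂ) (c ^ n) • (adjoint B * adjoint (T ^ n)) := by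
      rw [← star_eq_adjoint, star_smul, ← star_eq_adjoint, ← star_eq_adjoint, star_mul]
      rfl
    have hBTn : B * T ^ n = c ^ n • (T ^ n * B) := aux_comm_pow c T B hcomm n
    have h5 : adjoint (T ^ n) * adjoint B
        = (starRingEnd ℂ) (c ^ n) • (adjoint B * adjoint (T ^ n)) := by
      rw [← h1, hBTn, h2]
    have h3 : adjoint (T ^ n) (adjoint B h)
        = ((starRingEnd ℂ) (c ^ n)) • (adjoint B (adjoint (T ^ n) h)) := by
      have := congrArg (fun (X : H →L[ℂ] H) => X h) h5
      simpa using this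
    have h4 : ‖((adjoint T) ^ n) (adjoint B h)‖ ≤ ‖((adjoint T) ^ n) h‖ := by
      rw [hpow, h3, norm_smul]
      have hcn : ‖(starRingEnd ℂ) (c ^ n)‖ = 1 := by
        simp [hc]
      rw [hcn, one_mul]
      calc ‖adjoint B (adjoint (T ^ n) h)‖ ≤ ‖adjoint B‖ * ‖adjoint (T ^ n) h‖ :=
            (adjoint B).le_opNorm _
        _ ≤ 1 * ‖adjoint (T ^ n) h‖ :=
            mul_le_mul_of_nonneg_right hBadj (norm_nonneg _)
        _ = ‖adjoint (T ^ n) h‖ := one_mul _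
    exact pow_le_pow_left₀ (norm_nonneg _) h4 2
  have l1 := aux_norm_lim T Q hQ hQlim (adjoint B h)
  have l2 := aux_norm_lim T Q hQ hQlim h
  have := le_of_tendsto_of_tendsto' l1 l2 hptwise
  nlinarith [norm_nonneg (Q (adjoint B h)), norm_nonneg (Q h)]

end Aux2

/-- Let `T1, T2` be `q`-commuting contractions, `T = T1 T2`, and `Q` the positive square
root of the SOT-limit of `Tⁿ T*ⁿ`.  Then `⟨Tᵢ Q² Tᵢ* h, h⟩ ≤ ⟨Q² h, h⟩` for `i = 1, 2`; in
particular the densely defined maps `Q h ↦ Q Tᵢ* h` extend to contractions on the closure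
of the range of `Q`. -/
theorem Q_contraction_extensions
    {H : Type*} [NormedAddCommGroup H] [InnerProductSpace ℂ H] [CompleteSpace H]
    (q : ℂ) (hq : ‖q‖ = 1)
    (T1 T2 : H →L[ℂ] H) (hT1 : ‖T1‖ ≤ 1) (hT2 : ‖T2‖ ≤ 1)
    (hcomm : T1 * T2 = q • (T2 * T1))
    (Q : H →L[ℂ] H) (hQ : Q.IsPositive)
    (hQlim : ∀ h : H, Tendsto
      (fun n : ℕ => ((T1 * T2) ^ n * (adjoint (T1 * T2)) ^ n) h) atTop (𝓝 ((Q * Q) h))) :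
    (∀ h : H,
      (⟪(T1 * (Q * Q) * adjoint T1) h, h⟫_ℂ).re ≤ (⟪(Q * Q) h, h⟫_ℂ).re ∧
      (⟪(T2 * (Q * Q) * adjoint T2) h, h⟫_ℂ).re ≤ (⟪(Q * Q) h, h⟫_ℂ).re) ∧
    ∃ X1 X2 : (LinearMap.range (Q : H →ₗ[ℂ] H)).topologicalClosure →L[ℂ]
        (LinearMap.range (Q : H →ₗ[ℂ] H)).topologicalClosure,
      ‖X1‖ ≤ 1 ∧ ‖X2‖ ≤ 1 ∧
      (∀ (h : H) (x : (LinearMap.range (Q : H →ₗ[ℂ] H)).topologicalClosure),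
        (x : H) = Q h → ((X1 x : (LinearMap.range (Q : H →ₗ[ℂ] H)).topologicalClosure) : H)
          = Q (adjoint T1 h)) ∧
      (∀ (h : H) (x : (LinearMap.range (Q : H →ₗ[ℂ] H)).topologicalClosure),
        (x : H) = Q h → ((X2 x : (LinearMap.range (Q : H →ₗ[ℂ] H)).topologicalClosure) : H)
          = Q (adjoint T2 h)) := by
  have hq0 : q ≠ 0 := by
    intro h0
    rw [h0, norm_zero] at hq
    norm_num at hq
  -- base commutation relations
  have c1 : T1 * (T1 * T2) = q • ((T1 * T2) * T1) := by
    calc T1 * (T1 * T2) = T1 * (q • (T2 * T1)) := by rw [hcomm]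
      _ = q • (T1 * (T2 * T1)) := mul_smul_comm q T1 (T2 * T1)
      _ = q • ((T1 * T2) * T1) := by rw [mul_assoc]
  have hc21 : T2 * T1 = q⁻¹ • (T1 * T2) := by
    rw [hcomm, smul_smul, inv_mul_cancel₀ hq0, one_smul]
  have c2 : T2 * (T1 * T2) = q⁻¹ • ((T1 * T2) * T2) := by
    calc T2 * (T1 * T2) = (T2 * T1) * T2 := by rw [mul_assoc]
      _ = (q⁻¹ • (T1 * T2)) * T2 := by rw [hc21]
      _ = q⁻¹ • ((T1 * T2) * T2) := smul_mul_assoc q⁻¹ (T1 * T2) T2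
  have hqinv : ‖q⁻¹‖ = 1 := by rw [norm_inv, hq]; norm_num
  have key1 : ∀ h : H, ‖Q (adjoint T1 h)‖ ≤ ‖Q h‖ :=
    aux_key q hq (T1 * T2) T1 hT1 c1 Q hQ hQlim
  have key2 : ∀ h : H, ‖Q (adjoint T2 h)‖ ≤ ‖Q h‖ :=
    aux_key q⁻¹ hqinv (T1 * T2) T2 hT2 c2 Q hQ hQlim
  have hQadj : adjoint Q = Q := isSelfAdjoint_iff'.mp hQ.isSelfAdjoint
  -- rewrite the quadratic forms as squared norms
  have form : ∀ (B : H →L[ℂ] H) (h : H),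
      (⟪(B * (Q * Q) * adjoint B) h, h⟫_ℂ).re = ‖Q (adjoint B h)‖ ^ 2 := by
    intro B h
    have e1 : (B * (Q * Q) * adjoint B) h
        = adjoint (adjoint B) (Q (Q (adjoint B h))) := by
      rw [adjoint_adjoint]; rfl
    rw [e1, adjoint_inner_left]
    have e2 : Q (Q (adjoint B h)) = adjoint Q (Q (adjoint B h)) := by rw [hQadj]
    rw [e2, adjoint_inner_left, inner_self_eq_norm_sq_to_K]
    simp [← Complex.ofReal_pow]
  have formQ : ∀ h : H, (⟪(Q * Q) h, h⟫_ℂ).re = ‖Q h‖ ^ 2 := by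
    intro h
    have e2 : (Q * Q) h = adjoint Q (Q h) := by rw [hQadj]; rfl
    rw [e2, adjoint_inner_left, inner_self_eq_norm_sq_to_K]
    simp [← Complex.ofReal_pow]
  constructor
  · intro h
    constructor
    · rw [form T1 h, formQ h]
      exact pow_le_pow_left₀ (norm_nonneg _) (key1 h) 2
    · rw [form T2 h, formQ h]
      exact pow_le_pow_left₀ (norm_nonneg _) (key2 h) 2
  · obtain ⟨X1, hX1n, hX1⟩ := aux_extension Q (adjoint T1) key1
    obtain ⟨X2, hX2n, hX2⟩ := aux_extension Q (adjoint T2) key2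
    exact ⟨X1, X2, hX1n, hX2n, hX1, hX2⟩
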